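/- Let n ≥ 1, let D ⊆ ℝⁿ be open and bounded with 0 ∈ D, let f : ℝⁿ → ℝⁿ be continuous, and let V : ℝⁿ → ℝ be continuous on the closure of D and continuously differentiable on D, with V 0 = 0, V x > 0 for all x ∈ D \ {0}, and (fderiv ℝ V x) (f x) < 0 for all x ∈ D \ {0} with V x < 1. Let x₀ ∈ D with V x₀ < 1, assume the sublevel set {x ∈ closure D | V x ≤ V x₀} is contained in D, and let X : ℝ → ℝⁿ satisfy X 0 = x₀, HasDerivAt X (f (X t)) t for all t ≥ 0, and X t ∈ D for all t ≥ 0. Then V (X t) ≤ V x₀ for all t ≥ 0 (in particular X t remains in the basin {x ∈ D | V x < 1}), and X t → 0 as t → ∞. -/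

import Mathlib

open Filter Topology

/-- Theorem 1 (Lyapunov characterization of a basin of attraction): if `V` is a local
Lyapunov function on the open bounded set `D`, `x₀ ∈ D` with `V x₀ < 1`, the sublevel set
`{x ∈ closure D | V x ≤ V x₀}` is contained in `D`, and `X` is a trajectory of `ẋ = f(x)`
starting at `x₀` that remains in `D`, then `V (X t) ≤ V x₀` for all `t ≥ 0` and
`X t → 0` as `t → ∞`. -/
theorem basin_of_attraction
    (n : ℕ) (hn : 1 ≤ n)
    (D : Set (EuclideanSpace ℝ (Fin n))) (hD : IsOpen D)
    (hDb : Bornology.IsBounded D)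
    (h0D : (0 : EuclideanSpace ℝ (Fin n)) ∈ D)
    (f : EuclideanSpace ℝ (Fin n) → EuclideanSpace ℝ (Fin n)) (hf : Continuous f)
    (V : EuclideanSpace ℝ (Fin n) → ℝ)
    (hVc : ContinuousOn V (closure D))
    (hVd : ContDiffOn ℝ 1 V D)
    (hV0 : V 0 = 0)
    (hVpos : ∀ x ∈ D \ {(0 : EuclideanSpace ℝ (Fin n))}, 0 < V x)
    (hVdec : ∀ x ∈ D \ {(0 : EuclideanSpace ℝ (Fin n))}, V x < 1 → fderiv ℝ V x (f x) < 0)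
    (x₀ : EuclideanSpace ℝ (Fin n)) (hx₀ : x₀ ∈ D) (hVx₀ : V x₀ < 1)
    (hsub : {x ∈ closure D | V x ≤ V x₀} ⊆ D)
    (X : ℝ → EuclideanSpace ℝ (Fin n))
    (hX0 : X 0 = x₀)
    (hX : ∀ t : ℝ, 0 ≤ t → HasDerivAt X (f (X t)) t)
    (hXD : ∀ t : ℝ, 0 ≤ t → X t ∈ D) :
    (∀ t : ℝ, 0 ≤ t → V (X t) ≤ V x₀) ∧
      Tendsto X atTop (𝓝 (0 : EuclideanSpace ℝ (Fin n))) := by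
  set c := V x₀ with hc
  set g : ℝ → ℝ := fun t => V (X t) with hgdef
  set φ : ℝ → ℝ := fun t => fderiv ℝ V (X t) (f (X t)) with hφdef
  -- chain rule
  have hderiv : ∀ t : ℝ, 0 ≤ t → HasDerivAt g (φ t) t := by
    intro t ht
    have hXt : X t ∈ D := hXD t ht
    have hVdiff : DifferentiableAt ℝ V (X t) :=
      (hVd.differentiableOn one_ne_zero).differentiableAt (hD.mem_nhds hXt)
    exact hVdiff.hasFDerivAt.comp_hasDerivAt t (hX t ht)
  have hg0 : g 0 = c := by simp [hgdef, hX0, hc]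
  -- fderiv at 0 is 0
  have hf0 : fderiv ℝ V 0 = 0 := by
    have hmin : IsLocalMin V 0 := by
      have hmem : D ∈ 𝓝 (0 : EuclideanSpace ℝ (Fin n)) := hD.mem_nhds h0D
      refine Filter.eventually_of_mem hmem fun x hx => ?_
      rcases eq_or_ne x 0 with rfl | hx0
      · exact le_rfl
      · rw [hV0]; exact (hVpos x ⟨hx, hx0⟩).le
    exact hmin.fderiv_eq_zero
  have hφnonpos : ∀ t : ℝ, 0 ≤ t → g t < 1 → φ t ≤ 0 := by
    intro t ht h1
    by_cases h : X t = 0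
    · simp [hφdef, h, hf0]
    · exact (hVdec (X t) ⟨hXD t ht, h⟩ h1).le
  have hgcont : ∀ t : ℝ, 0 ≤ t → ContinuousAt g t := fun t ht => (hderiv t ht).continuousAt
  -- Part 1 : g t ≤ c for all t ≥ 0
  have part1 : ∀ t : ℝ, 0 ≤ t → g t ≤ c := by
    by_contra hcon
    push_neg at hcon
    obtain ⟨t₂, ht₂0, ht₂⟩ := hcon
    set S : Set ℝ := {t : ℝ | 0 ≤ t ∧ c < g t} with hSdef
    have hSne : S.Nonempty := ⟨t₂, ht₂0, ht₂⟩
    have hSbd : BddBelow S := ⟨0, fun t ht => ht.1⟩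
    set t₁ := sInf S with ht₁def
    have ht₁0 : 0 ≤ t₁ := le_csInf hSne fun t ht => ht.1
    have hgt₁ : g t₁ ≤ c := by
      by_contra hgt
      push_neg at hgt
      rcases eq_or_lt_of_le ht₁0 with h0 | h0
      · rw [← h0, hg0] at hgt; exact lt_irrefl c hgt
      · -- find member of S strictly below t₁
        have hcont1 : ContinuousAt g t₁ := hgcont t₁ ht₁0
        have hev : ∀ᶠ s in 𝓝 t₁, c < g s := hcont1.eventually_const_lt hgt
        obtain ⟨δ, hδ, hball⟩ := Metric.eventually_nhds_iff.mp hev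
        set s := max (t₁ - δ / 2) (t₁ / 2) with hsdef
        have hs0 : 0 ≤ s := le_trans (by linarith) (le_max_right _ _)
        have hst : s < t₁ := max_lt (by linarith) (by linarith)
        have hdist : dist s t₁ < δ := by
          rw [Real.dist_eq, abs_lt]
          constructor
          · have : t₁ - δ / 2 ≤ s := le_max_left _ _
            linarith
          · linarith
        have hsS : s ∈ S := ⟨hs0, hball hdist⟩
        exact absurd (csInf_le hSbd hsS) (not_le.mpr hst)
    -- g t₁ ≤ c < 1; find δ with g < 1 near t₁
    have hlt1 : g t₁ < 1 := lt_of_le_of_lt hgt₁ hVx₀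
    have hev : ∀ᶠ s in 𝓝 t₁, g s < 1 := (hgcont t₁ ht₁0).eventually_lt_const hlt1
    obtain ⟨δ, hδ, hball⟩ := Metric.eventually_nhds_iff.mp hev
    have hanti : AntitoneOn g (Set.Icc t₁ (t₁ + δ / 2)) := by
      apply antitoneOn_of_deriv_nonpos (convex_Icc _ _)
      · intro x hx
        exact ((hgcont x (le_trans ht₁0 hx.1)).continuousWithinAt)
      · rw [interior_Icc]
        intro x hx
        exact ((hderiv x (le_trans ht₁0 hx.1.le)).differentiableAt).differentiableWithinAt
      · rw [interior_Icc]
        intro x hx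
        have hx0 : 0 ≤ x := le_trans ht₁0 hx.1.le
        rw [(hderiv x hx0).deriv]
        apply hφnonpos x hx0
        apply hball
        rw [Real.dist_eq, abs_lt]
        constructor <;> [linarith [hx.1]; linarith [hx.2]]
    obtain ⟨s, hsS, hslt⟩ := exists_lt_of_csInf_lt hSne (show t₁ < t₁ + δ / 2 by linarith)
    have hst₁ : t₁ ≤ s := csInf_le hSbd hsS
    have : g s ≤ g t₁ :=
      hanti ⟨le_rfl, by linarith⟩ ⟨hst₁, hslt.le⟩ hst₁
    exact absurd (lt_of_le_of_lt (le_trans this hgt₁) hsS.2) (lt_irrefl _)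
  have hglt1 : ∀ t : ℝ, 0 ≤ t → g t < 1 := fun t ht => lt_of_le_of_lt (part1 t ht) hVx₀
  have hgnonneg : ∀ t : ℝ, 0 ≤ t → 0 ≤ g t := by
    intro t ht
    rcases eq_or_ne (X t) 0 with h | h
    · simp [hgdef, h, hV0]
    · exact (hVpos (X t) ⟨hXD t ht, h⟩).le
  -- g is antitone on [0, ∞)
  have hantiIci : AntitoneOn g (Set.Ici 0) := by
    apply antitoneOn_of_deriv_nonpos (convex_Ici 0)
    · intro x hx; exact (hgcont x hx).continuousWithinAt
    · rw [interior_Ici]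
      intro x hx
      exact ((hderiv x hx.le).differentiableAt).differentiableWithinAt
    · rw [interior_Ici]
      intro x hx
      rw [(hderiv x hx.le).deriv]
      exact hφnonpos x hx.le (hglt1 x hx.le)
  -- extend to an antitone function on ℝ
  set h : ℝ → ℝ := fun t => g (max t 0) with hhdef
  have hhanti : Antitone h := by
    intro a b hab
    exact hantiIci (le_max_right a 0) (le_max_right b 0) (max_le_max hab le_rfl)
  have hhbdd : BddBelow (Set.range h) := by
    refine ⟨0, ?_⟩
    rintro y ⟨t, rfl⟩
    exact hgnonneg _ (le_max_right _ _)
  set L := ⨅ t : ℝ, h t with hLdef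
  have hhtend : Tendsto h atTop (𝓝 L) := tendsto_atTop_ciInf hhanti hhbdd
  have hgtend : Tendsto g atTop (𝓝 L) := by
    refine hhtend.congr' ?_
    filter_upwards [eventually_ge_atTop (0 : ℝ)] with t ht
    simp [hhdef, max_eq_left ht]
  have hL0 : 0 ≤ L := le_ciInf fun t => hgnonneg _ (le_max_right _ _)
  have hLle : ∀ t : ℝ, 0 ≤ t → L ≤ g t := by
    intro t ht
    simpa [hhdef, sup_eq_left.mpr ht] using ciInf_le hhbdd t
  have hDclcompact : IsCompact (closure D) := hDb.isCompact_closure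
  -- L = 0
  have hLzero : L = 0 := by
    by_contra hL
    have hLpos : 0 < L := lt_of_le_of_ne hL0 (Ne.symm hL)
    set K : Set (EuclideanSpace ℝ (Fin n)) :=
      {x | x ∈ closure D ∧ L ≤ V x ∧ V x ≤ c} with hKdef
    have hKclosed : IsClosed K := by
      have : K = closure D ∩ V ⁻¹' Set.Icc L c := by
        ext x
        simp only [hKdef, Set.mem_setOf_eq, Set.mem_inter_iff, Set.mem_preimage, Set.mem_Icc]
        try tauto
      rw [this]
      exact hVc.preimage_isClosed_of_isClosed isClosed_closure isClosed_Icc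
    have hKcompact : IsCompact K :=
      hDclcompact.of_isClosed_subset hKclosed fun x hx => hx.1
    have hKD : K ⊆ D := fun x hx => hsub ⟨hx.1, hx.2.2⟩
    have hKD' : ∀ x ∈ K, x ∈ D \ {(0 : EuclideanSpace ℝ (Fin n))} := by
      intro x hx
      refine ⟨hKD hx, ?_⟩
      intro h0
      rw [Set.mem_singleton_iff] at h0
      have h2 := hx.2.1
      rw [h0, hV0] at h2
      exact absurd h2 (not_le.mpr hLpos)
    have hXK : ∀ t : ℝ, 0 ≤ t → X t ∈ K := fun t ht =>
      ⟨subset_closure (hXD t ht), hLle t ht, part1 t ht⟩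
    have hKne : K.Nonempty := ⟨X 0, hXK 0 le_rfl⟩
    have hwcont : ContinuousOn (fun x => fderiv ℝ V x (f x)) D :=
      (hVd.continuousOn_fderiv_of_isOpen hD le_rfl).clm_apply hf.continuousOn
    obtain ⟨xm, hxmK, hxmmax⟩ := hKcompact.exists_isMaxOn hKne ((hwcont.mono hKD))
    set m := -(fderiv ℝ V xm (f xm)) with hmdef
    have hmpos : 0 < m := by
      have := hVdec xm (hKD' xm hxmK) (lt_of_le_of_lt hxmK.2.2 hVx₀)
      linarith
    have hφle : ∀ t : ℝ, 0 ≤ t → φ t ≤ -m := by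
      intro t ht
      have := hxmmax (hXK t ht)
      simpa [hmdef, hφdef] using this
    -- G t = g t + m * t is antitone on [0, ∞)
    have hGanti : AntitoneOn (fun t => g t + m * t) (Set.Ici 0) := by
      apply antitoneOn_of_deriv_nonpos (convex_Ici 0)
      · intro x hx
        exact ((hgcont x hx).add (continuous_const.mul continuous_id).continuousAt).continuousWithinAt
      · rw [interior_Ici]
        intro x hx
        exact (((hderiv x hx.le).add ((hasDerivAt_id x).const_mul m)).differentiableAt).differentiableWithinAt
      · rw [interior_Ici]
        intro x hx
        have hG : HasDerivAt (fun t => g t + m * t) (φ x + m * 1) x :=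
          (hderiv x hx.le).add ((hasDerivAt_id x).const_mul m)
        rw [hG.deriv]
        have := hφle x hx.le
        linarith
    have hbound : ∀ t : ℝ, 0 ≤ t → g t + m * t ≤ c := by
      intro t ht
      have := hGanti (Set.self_mem_Ici) (Set.mem_Ici.mpr ht) ht
      simpa [hg0] using this
    set T := (c + 1) / m with hTdef
    have hT0 : 0 ≤ T := by
      apply div_nonneg _ hmpos.le
      have : 0 ≤ c := hg0 ▸ hgnonneg 0 le_rfl
      linarith
    have h1 := hbound T hT0
    have h2 : m * T = c + 1 := by
      rw [hTdef, mul_div_cancel₀]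
      exact ne_of_gt hmpos
    have := hgnonneg T hT0
    linarith
  rw [hLzero] at hgtend
  refine ⟨part1, ?_⟩
  -- convergence of X to 0
  rw [show (0 : EuclideanSpace ℝ (Fin n)) = 0 from rfl]
  rw [NormedAddCommGroup.tendsto_nhds_zero]
  intro ε hε
  set K' : Set (EuclideanSpace ℝ (Fin n)) :=
    {x | x ∈ closure D ∧ V x ≤ c ∧ ε ≤ ‖x‖} with hK'def
  have hnotK' : ∀ t : ℝ, 0 ≤ t → X t ∉ K' → ‖X t‖ < ε := by
    intro t ht hn'
    by_contra hnorm
    push_neg at hnorm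
    exact hn' ⟨subset_closure (hXD t ht), part1 t ht, hnorm⟩
  rcases Set.eq_empty_or_nonempty K' with hK'e | hK'ne
  · filter_upwards [eventually_ge_atTop (0 : ℝ)] with t ht
    apply hnotK' t ht
    rw [hK'e]
    exact Set.notMem_empty _
  · have hK'closed : IsClosed K' := by
      have : K' = (closure D ∩ V ⁻¹' Set.Iic c) ∩ (fun x => ‖x‖) ⁻¹' Set.Ici ε := by
        ext x
        simp only [hK'def, Set.mem_setOf_eq, Set.mem_inter_iff, Set.mem_preimage,
          Set.mem_Iic, Set.mem_Ici]
        try tauto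
      rw [this]
      exact ((hVc.preimage_isClosed_of_isClosed isClosed_closure isClosed_Iic).inter
        (isClosed_Ici.preimage continuous_norm))
    have hK'compact : IsCompact K' :=
      hDclcompact.of_isClosed_subset hK'closed fun x hx => hx.1
    obtain ⟨xm, hxmK, hxmmin⟩ :=
      hK'compact.exists_isMinOn hK'ne (hVc.mono fun x hx => hx.1)
    have hxmD : xm ∈ D := hsub ⟨hxmK.1, hxmK.2.1⟩
    have hxm0 : xm ≠ 0 := by
      intro h0
      have h2 := hxmK.2.2
      rw [h0, norm_zero] at h2
      exact absurd h2 (not_le.mpr hε)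
    have hVm : 0 < V xm := hVpos xm ⟨hxmD, hxm0⟩
    have hev : ∀ᶠ t in atTop, g t < V xm := hgtend.eventually_lt_const hVm
    filter_upwards [hev, eventually_ge_atTop (0 : ℝ)] with t ht1 ht2
    apply hnotK' t ht2
    intro hmem
    exact absurd (hxmmin hmem) (not_le.mpr ht1)
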